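/- Let x₁,...,x_n be IID random variables on a finite set X with distribution p, and let p_{x^n} be their empirical distribution. Then for any γ > 0, P(||p_{x^n} - p||_1 ≥ γ) ≤ 2^{|X|} · exp(-nγ²/2). -/

import Mathlib

open MeasureTheory ProbabilityTheory BigOperators Finset

/-- Empirical distribution of `n` samples: `emp x ω a = (1/n)·#{k : x_k(ω) = a}`. -/
noncomputable def emp {X Ω : Type*} [Fintype X] [DecidableEq X]
    (n : ℕ) (x : Fin n → Ω → X) (ω : Ω) : X → ℝ :=
  fun a => (∑ k, if x k ω = a then (1 : ℝ) else 0) / n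

/-- Hoeffding's lemma for Bernoulli(q): mgf bound. -/
lemma bernoulli_mgf_bound' (q : ℝ) (hq0 : 0 ≤ q) (hq1 : q ≤ 1) {t : ℝ} (ht : 0 ≤ t) :
    1 - q + q * Real.exp t ≤ Real.exp (q * t + t ^ 2 / 8) := by
  have hD : ∀ s : ℝ, 0 < 1 - q + q * Real.exp s := by
    intro s
    rcases le_or_gt 1 (Real.exp s) with h | h
    · nlinarith [le_mul_of_one_le_right hq0 h]
    · nlinarith [Real.exp_pos s, mul_nonneg (sub_nonneg.2 hq1) (sub_nonneg.2 h.le)]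
  -- the ratio function and its derivative
  have hN : ∀ s : ℝ, HasDerivAt (fun s => q * Real.exp s) (q * Real.exp s) s :=
    fun s => (Real.hasDerivAt_exp s).const_mul q
  have hDder : ∀ s : ℝ, HasDerivAt (fun s => 1 - q + q * Real.exp s) (q * Real.exp s) s :=
    fun s => (hN s).const_add (1 - q)
  -- inner function u
  set u : ℝ → ℝ := fun s => q + s / 4 - q * Real.exp s / (1 - q + q * Real.exp s) with hu_def
  have hu : ∀ s : ℝ, HasDerivAt u
      (1 / 4 - (q * Real.exp s * (1 - q + q * Real.exp s) -
        q * Real.exp s * (q * Real.exp s)) / (1 - q + q * Real.exp s) ^ 2) s := by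
    intro s
    have h1 : HasDerivAt (fun s : ℝ => q + s / 4) (1 / 4) s := by
      simpa using ((hasDerivAt_id s).div_const 4).const_add q
    exact h1.sub (((hN s).div (hDder s)) (hD s).ne')
  have hu_diff : Differentiable ℝ u := fun s => (hu s).differentiableAt
  have hu_deriv_nonneg : ∀ s : ℝ, 0 ≤ deriv u s := by
    intro s
    rw [(hu s).deriv]
    rw [sub_nonneg, div_le_iff₀ (pow_pos (hD s) 2)]
    nlinarith [sq_nonneg ((1 - q + q * Real.exp s) - 2 * (q * Real.exp s)), Real.exp_pos s]
  have hu_mono : Monotone u := monotone_of_deriv_nonneg hu_diff hu_deriv_nonneg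
  have hu0 : u 0 = 0 := by simp [hu_def]
  have hkey : ∀ s : ℝ, 0 ≤ s → q * Real.exp s / (1 - q + q * Real.exp s) ≤ q + s / 4 := by
    intro s hs
    have := hu_mono hs
    rw [hu0] at this
    simp only [hu_def] at this
    linarith
  -- outer function g
  set g : ℝ → ℝ := fun s => q * s + s ^ 2 / 8 - Real.log (1 - q + q * Real.exp s) with hg_def
  have hg : ∀ s : ℝ, HasDerivAt g
      (q + 2 * s ^ 1 / 8 - q * Real.exp s / (1 - q + q * Real.exp s)) s := by
    intro s
    have h1 : HasDerivAt (fun s : ℝ => q * s + s ^ 2 / 8) (q + 2 * s ^ 1 / 8) s := by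
      have hq' : HasDerivAt (fun s : ℝ => q * s) q s := by
        simpa using (hasDerivAt_id s).const_mul q
      exact hq'.add ((hasDerivAt_pow 2 s).div_const 8)
    have h2 : HasDerivAt (fun s : ℝ => Real.log (1 - q + q * Real.exp s))
        (q * Real.exp s / (1 - q + q * Real.exp s)) s := (hDder s).log (hD s).ne'
    exact h1.sub h2
  have hg_mono : MonotoneOn g (Set.Ici 0) := by
    refine monotoneOn_of_deriv_nonneg (convex_Ici 0)
      (fun s _ => ((hg s).differentiableAt).continuousAt.continuousWithinAt)
      (fun s _ => ((hg s).differentiableAt).differentiableWithinAt) ?_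
    intro s hs
    rw [interior_Ici] at hs
    rw [(hg s).deriv]
    have := hkey s hs.le
    have hpow : (2 : ℝ) * s ^ 1 / 8 = s / 4 := by ring
    rw [hpow]
    linarith
  have hg0 : g 0 = 0 := by simp [hg_def]
  have h := hg_mono (Set.mem_Ici.2 le_rfl) (Set.mem_Ici.2 ht) ht
  rw [hg0] at h
  simp only [hg_def] at h
  have hlog : Real.log (1 - q + q * Real.exp t) ≤ q * t + t ^ 2 / 8 := by linarith
  exact (Real.log_le_iff_le_exp (hD t)).1 hlog

lemma mgf_indicator' {Ω : Type*} [MeasurableSpace Ω] (μ : Measure Ω) [IsProbabilityMeasure μ]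
    (B : Set Ω) (hB : MeasurableSet B) (t : ℝ) :
    mgf (B.indicator fun _ => (1 : ℝ)) μ t
      = 1 - (μ B).toReal + (μ B).toReal * Real.exp t := by
  have hfun : (fun ω => Real.exp (t * B.indicator (fun _ => (1:ℝ)) ω))
      = fun ω => Set.indicator B (fun _ => Real.exp t - 1) ω + 1 := by
    ext ω
    by_cases h : ω ∈ B <;> simp [h, Set.indicator_of_mem, Set.indicator_of_notMem]
  rw [mgf, hfun, integral_add ((integrable_const (Real.exp t - 1)).indicator hB)
      (integrable_const 1), integral_indicator_const _ hB]
  simp [measure_univ]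
  simp only [measureReal_def]
  ring

/-- L1 concentration of the empirical distribution of `n` IID samples:
`P(‖p_{xⁿ} - p‖₁ ≥ γ) ≤ 2^{|X|}·exp(-nγ²/2)`. -/
theorem stmt18 {Ω X : Type*} [MeasurableSpace Ω] {mX : MeasurableSpace X}
    [Fintype X] [DecidableEq X] [MeasurableSingletonClass X]
    (μ : Measure Ω) [IsProbabilityMeasure μ]
    (p : X → ℝ) (hp : (∀ a, 0 ≤ p a) ∧ ∑ a, p a = 1)
    (n : ℕ) (hn : 0 < n) (x : Fin n → Ω → X)
    (hxm : ∀ k, Measurable (x k))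
    (hindep : iIndepFun (m := fun _ => mX) x μ)
    (hid : ∀ k a, μ {ω | x k ω = a} = ENNReal.ofReal (p a))
    (γ : ℝ) (hγ : 0 < γ) :
    μ {ω | γ ≤ ∑ a, |emp n x ω a - p a|} ≤
      ENNReal.ofReal ((2 : ℝ) ^ (Fintype.card X) * Real.exp (-(n : ℝ) * γ ^ 2 / 2)) := by
  classical
  obtain ⟨hp0, hp1⟩ := hp
  have hn' : (0 : ℝ) < n := Nat.cast_pos.2 hn
  set t : ℝ := 2 * γ with ht_def
  have ht : 0 ≤ t := by positivity
  -- the indicator variables for a subset A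
  set Y : Finset X → Fin n → Ω → ℝ :=
    fun A k => ((↑A : Set X).indicator (fun _ => (1:ℝ))) ∘ x k with hY_def
  set E : Finset X → Set Ω :=
    fun A => {ω | (n : ℝ) * ((∑ a ∈ A, p a) + γ / 2) ≤ ∑ k, Y A k ω} with hE_def
  have hYval : ∀ A k ω, Y A k ω = if x k ω ∈ A then (1:ℝ) else 0 := by
    intro A k ω
    simp [hY_def, Set.indicator_apply]
  -- Step 1: inclusion into the union
  have hsub : {ω | γ ≤ ∑ a, |emp n x ω a - p a|} ⊆ ⋃ A : Finset X, E A := by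
    intro ω hω
    simp only [Set.mem_setOf_eq] at hω
    set e : X → ℝ := emp n x ω with he_def
    have hsum_e : ∑ a, e a = 1 := by
      simp only [he_def, emp, ← Finset.sum_div]
      rw [Finset.sum_comm]
      simp only [Finset.sum_ite_eq, Finset.mem_univ, if_true]
      rw [Finset.sum_const, Finset.card_univ, Fintype.card_fin]
      field_simp
      simp
    set A : Finset X := Finset.univ.filter (fun a => p a < e a) with hA_def
    have hS : ∑ a ∈ A, e a = (∑ k, Y A k ω) / n := by
      simp only [he_def, emp, ← Finset.sum_div]
      congr 1
      rw [Finset.sum_comm]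
      refine Finset.sum_congr rfl fun k _ => ?_
      rw [Finset.sum_ite_eq A (x k ω) (fun _ => (1:ℝ)), hYval]
    have h0 : ∑ a ∈ A, (e a - p a) + ∑ a ∈ Finset.univ.filter (fun a => ¬ p a < e a),
        (e a - p a) = 0 := by
      rw [Finset.sum_filter_add_sum_filter_not, Finset.sum_sub_distrib, hsum_e, hp1]
      ring
    have habs : ∑ a, |e a - p a| = ∑ a ∈ A, (e a - p a)
        - ∑ a ∈ Finset.univ.filter (fun a => ¬ p a < e a), (e a - p a) := by
      rw [← Finset.sum_filter_add_sum_filter_not Finset.univ (fun a => p a < e a)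
        (fun a => |e a - p a|)]
      rw [sub_eq_add_neg, ← Finset.sum_neg_distrib]
      congr 1
      · exact Finset.sum_congr rfl fun a ha =>
          abs_of_pos (sub_pos.2 (Finset.mem_filter.1 ha).2)
      · exact Finset.sum_congr rfl fun a ha =>
          abs_of_nonpos (by linarith [not_lt.1 (Finset.mem_filter.1 ha).2])
    have hγ2 : γ ≤ 2 * ∑ a ∈ A, (e a - p a) := by
      rw [habs] at hω; linarith
    refine Set.mem_iUnion.2 ⟨A, ?_⟩
    simp only [hE_def, Set.mem_setOf_eq]
    rw [Finset.sum_sub_distrib, hS] at hγ2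
    have h6 : γ / 2 + ∑ a ∈ A, p a ≤ (∑ k, Y A k ω) / n := by linarith
    have h7 := (le_div_iff₀ hn').1 h6
    linarith
  -- Step 2: per-subset Chernoff bound
  have hbound : ∀ A : Finset X, μ (E A) ≤ ENNReal.ofReal (Real.exp (-(n:ℝ) * γ ^ 2 / 2)) := by
    intro A
    set qA : ℝ := ∑ a ∈ A, p a with hqA_def
    have hqA0 : 0 ≤ qA := Finset.sum_nonneg fun a _ => hp0 a
    have hqA1 : qA ≤ 1 := by
      rw [← hp1]
      exact Finset.sum_le_sum_of_subset_of_nonneg (Finset.subset_univ A) fun a _ _ => hp0 a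
    have hAmeas : MeasurableSet (↑A : Set X) := A.finite_toSet.measurableSet
    have hYm : ∀ k, Measurable (Y A k) :=
      fun k => (measurable_of_countable _).comp (hxm k)
    have hY01 : ∀ k ω, 0 ≤ Y A k ω ∧ Y A k ω ≤ 1 := by
      intro k ω; rw [hYval]; split_ifs <;> norm_num
    have hindepY : iIndepFun (m := fun _ => inferInstance) (Y A) μ :=
      hindep.comp (fun _ => (↑A : Set X).indicator (fun _ => (1:ℝ)))
        (fun _ => measurable_of_countable _)
    -- measure of preimage
    have hpre : ∀ k, μ (x k ⁻¹' ↑A) = ENNReal.ofReal qA := by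
      intro k
      have hset : x k ⁻¹' ↑A = ⋃ a ∈ A, {ω | x k ω = a} := by
        ext ω; simp [Set.mem_preimage]
      have hdisj : (↑A : Set X).PairwiseDisjoint (fun a => {ω | x k ω = a}) := by
        intro a _ b _ hab
        simp only [Function.onFun, Set.disjoint_left]
        intro ω h1 h2
        have h1' : x k ω = a := h1
        have h2' : x k ω = b := h2
        exact hab (h1'.symm.trans h2')
      have hmb := measure_biUnion_finset (μ := μ) hdisj
        (fun a _ => (hxm k) (measurableSet_singleton a))
      rw [hset, hmb, hqA_def, ENNReal.ofReal_sum_of_nonneg fun a _ => hp0 a]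
      exact Finset.sum_congr rfl fun a _ => hid k a
    -- mgf of each Y A k
    have hmgf_k : ∀ k, mgf (Y A k) μ t = 1 - qA + qA * Real.exp t := by
      intro k
      have hYeq : Y A k = (x k ⁻¹' ↑A).indicator (fun _ => (1:ℝ)) := by
        ext ω; rw [hYval]; simp [Set.indicator_apply, Set.mem_preimage]
      rw [hYeq, mgf_indicator' μ _ ((hxm k) hAmeas) t, hpre k,
        ENNReal.toReal_ofReal hqA0]
    -- integrability
    have hint_k : ∀ k, Integrable (fun ω => Real.exp (t * Y A k ω)) μ := by
      intro k
      refine Integrable.mono' (integrable_const (Real.exp t))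
        (((hYm k).const_mul t).exp.aestronglyMeasurable) (ae_of_all _ fun ω => ?_)
      rw [Real.norm_eq_abs, Real.abs_exp]
      exact Real.exp_le_exp.2 (mul_le_of_le_one_right ht (hY01 k ω).2)
    have hint : Integrable (fun ω => Real.exp (t * (∑ k, Y A k) ω)) μ :=
      hindepY.integrable_exp_mul_sum hYm (fun k _ => hint_k k)
    -- mgf of the sum
    have hmgf : mgf (∑ k, Y A k) μ t = (1 - qA + qA * Real.exp t) ^ n := by
      rw [hindepY.mgf_sum hYm Finset.univ]
      simp only [hmgf_k]
      rw [Finset.prod_const, Finset.card_univ, Fintype.card_fin]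
    -- Chernoff
    have hcher := measure_ge_le_exp_mul_mgf (μ := μ) (X := ∑ k, Y A k)
      ((n : ℝ) * (qA + γ / 2)) ht hint
    have hEset : E A = {ω | (n : ℝ) * (qA + γ / 2) ≤ (∑ k, Y A k) ω} := by
      ext ω; simp [hE_def, Finset.sum_apply, hqA_def]
    have hDpos : (0:ℝ) < 1 - qA + qA * Real.exp t := by
      nlinarith [Real.exp_pos t, le_mul_of_one_le_right hqA0 (Real.one_le_exp ht)]
    have hfinal : Real.exp (-t * ((n : ℝ) * (qA + γ / 2))) * mgf (∑ k, Y A k) μ t ≤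
        Real.exp (-(n:ℝ) * γ ^ 2 / 2) := by
      rw [hmgf]
      calc Real.exp (-t * ((n : ℝ) * (qA + γ / 2))) * (1 - qA + qA * Real.exp t) ^ n
          ≤ Real.exp (-t * ((n : ℝ) * (qA + γ / 2))) *
            Real.exp (qA * t + t ^ 2 / 8) ^ n :=
            mul_le_mul_of_nonneg_left
              (pow_le_pow_left₀ hDpos.le (bernoulli_mgf_bound' qA hqA0 hqA1 ht) n)
              (Real.exp_pos _).le
        _ = Real.exp (-t * ((n : ℝ) * (qA + γ / 2)) + n * (qA * t + t ^ 2 / 8)) := by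
            rw [← Real.exp_nat_mul, ← Real.exp_add]
        _ ≤ Real.exp (-(n:ℝ) * γ ^ 2 / 2) := by
            apply Real.exp_le_exp.2
            rw [ht_def]; ring_nf; nlinarith [hn'.le]
    rw [hEset]
    refine (ENNReal.le_ofReal_iff_toReal_le (measure_ne_top μ _) (Real.exp_pos _).le).2 ?_
    exact hcher.trans hfinal
  -- Step 3: union bound
  calc μ {ω | γ ≤ ∑ a, |emp n x ω a - p a|}
      ≤ μ (⋃ A : Finset X, E A) := measure_mono hsub
    _ ≤ ∑' A : Finset X, μ (E A) := measure_iUnion_le E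
    _ = ∑ A : Finset X, μ (E A) := tsum_fintype _
    _ ≤ ∑ _A : Finset X, ENNReal.ofReal (Real.exp (-(n:ℝ) * γ ^ 2 / 2)) :=
        Finset.sum_le_sum fun A _ => hbound A
    _ = (Fintype.card (Finset X)) * ENNReal.ofReal (Real.exp (-(n:ℝ) * γ ^ 2 / 2)) := by
        rw [Finset.sum_const, Finset.card_univ, nsmul_eq_mul]
    _ = ENNReal.ofReal ((2 : ℝ) ^ (Fintype.card X) * Real.exp (-(n : ℝ) * γ ^ 2 / 2)) := by
        rw [Fintype.card_finset, ENNReal.ofReal_mul (by positivity)]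
        congr 1
        rw [ENNReal.ofReal_pow (by norm_num : (0:ℝ) ≤ 2)]
        norm_num
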